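/- Let k be a positive integer, and let a compact set N of finite measure |N| = 1 be partitioned (up to boundary) into finitely many pieces N_α indexed by the leaves of an admissible binary tree, where each leaf piece satisfies |N_α| < 50^n/k and, for each internal node α, |N_{α0}|, |N_{α1}| ≥ |N_α|/25^n with |N_α| = |N_{α0}| + |N_{α1}|, and |N_α| ≥ 50^n/k at internal nodes. Set k_α = k|N_α|. Then Σ over internal nodes α of |N_α|^((n−1)/n), plus 1, is at most (1 + λ̃)·k^(1/n), where λ̃ = ((1/50^n)^((n−1)/n) + (1 − 1/50^n)^((n−1)/n) − 1)^(−1). -/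

import Mathlib

open Finset

private lemma aux_concave {p : ℝ} (hp0 : 0 < p) (hp1 : p < 1) {x y s : ℝ}
    (hx : 0 ≤ x) (hy : 0 ≤ y) (hs0 : 0 ≤ s) (hs1 : s ≤ 1) :
    s * x ^ p + (1 - s) * y ^ p ≤ (s * x + (1 - s) * y) ^ p := by
  have h := (Real.concaveOn_rpow hp0.le hp1.le).2 (Set.mem_Ici.mpr hx) (Set.mem_Ici.mpr hy)
    hs0 (show (0:ℝ) ≤ 1 - s by linarith) (show s + (1 - s) = 1 by ring)
  simpa using h

private lemma gmin {p lam t : ℝ} (hp0 : 0 < p) (hp1 : p < 1) (hl0 : 0 < lam)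
    (hl2 : lam < 1/2) (ht1 : lam ≤ t) (ht2 : t ≤ 1 - lam) :
    lam ^ p + (1 - lam) ^ p ≤ t ^ p + (1 - t) ^ p := by
  set a := lam with ha
  set d := 1 - lam with hd
  have hda : d - a ≠ 0 := by simp only [ha, hd]; intro h; linarith
  set s := (d - t) / (d - a) with hs
  have hs0 : 0 ≤ s := div_nonneg (by simp only [hd]; linarith) (by simp only [ha, hd]; linarith)
  have hs1 : s ≤ 1 := (div_le_one (by simp only [ha, hd]; linarith)).mpr (by simp only [ha, hd]; linarith)
  have hmul : s * (d - a) = d - t := div_mul_cancel₀ _ hda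
  have h1 : s * a + (1 - s) * d = t := by nlinarith [hmul]
  have h2 : s * d + (1 - s) * a = 1 - t := by
    have had : a + d = 1 := by simp [ha, hd]
    nlinarith [hmul]
  have ha0 : (0:ℝ) ≤ a := hl0.le
  have hd0 : (0:ℝ) ≤ d := by simp only [hd]; linarith
  calc a ^ p + d ^ p = (s * a ^ p + (1 - s) * d ^ p) + (s * d ^ p + (1 - s) * a ^ p) := by ring
    _ ≤ (s * a + (1 - s) * d) ^ p + (s * d + (1 - s) * a) ^ p :=
        add_le_add (aux_concave hp0 hp1 ha0 hd0 hs0 hs1) (aux_concave hp0 hp1 hd0 ha0 hs0 hs1)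
    _ = t ^ p + (1 - t) ^ p := by rw [h1, h2]

private lemma split_bound {p lam x y z : ℝ} (hp0 : 0 < p) (hp1 : p < 1) (hl0 : 0 < lam)
    (hl2 : lam < 1/2) (hx : 0 < x) (hsum : x = y + z) (hy : lam * x ≤ y) (hz : lam * x ≤ z) :
    (lam ^ p + (1 - lam) ^ p) * x ^ p ≤ y ^ p + z ^ p := by
  have ht1 : lam ≤ y / x := (le_div_iff₀ hx).mpr (by linarith)
  have ht2 : y / x ≤ 1 - lam := by
    rw [div_le_iff₀ hx]; nlinarith
  have hy0 : 0 ≤ y := le_trans (by positivity) hy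
  have h := gmin hp0 hp1 hl0 hl2 ht1 ht2
  have e1 : y ^ p = (y/x) ^ p * x ^ p := by
    rw [← Real.mul_rpow (by positivity) hx.le, div_mul_cancel₀ _ hx.ne']
  have e2' : (1 - y / x) * x = z := by field_simp; linarith
  have e2 : z ^ p = (1 - y/x) ^ p * x ^ p := by
    rw [← Real.mul_rpow (by linarith : (0:ℝ) ≤ 1 - y/x) hx.le, e2']
  rw [e1, e2]
  have hxp : (0:ℝ) ≤ x ^ p := by positivity
  nlinarith [h]

private lemma pref_step {β α : List Bool} (h : β <+: α) (hne : α ≠ β) :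
    β ++ [false] <+: α ∨ β ++ [true] <+: α := by
  obtain ⟨t, rfl⟩ := h
  match t with
  | [] => exact absurd (by simp) hne
  | b :: rest =>
    cases b
    · exact Or.inl ⟨rest, by simp⟩
    · exact Or.inr ⟨rest, by simp⟩

private lemma pref_incomp {β α : List Bool} (h0 : β ++ [false] <+: α)
    (h1 : β ++ [true] <+: α) : False := by
  obtain ⟨t0, h0⟩ := h0
  obtain ⟨t1, h1⟩ := h1
  rw [← h1] at h0
  simp at h0

private lemma pref_ne {β α : List Bool} {b : Bool} (h : β ++ [b] <+: α) : α ≠ β := by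
  intro he
  have := h.length_le
  simp [he] at this

private lemma pref_of_step {β α : List Bool} {b : Bool} (h : β ++ [b] <+: α) : β <+: α :=
  (List.prefix_append β [b]).trans h


set_option maxHeartbeats 1000000

/-- Claim 4.2 in the paper (modulo the constant `c(n)`).  A compact
set of total measure `1` is partitioned along a finite admissible binary tree,
with leaves of measure `< 50^n/k`, internal nodes of measure `≥ 50^n/k`, and
balanced splits `|N_{αi}| ≥ |N_α|/25^n`, `|N_α| = |N_{α0}| + |N_{α1}|`.  Then
`Σ_{internal α} |N_α|^((n−1)/n) + 1 ≤ (1+λ̃)·k^(1/n)` with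
`λ̃ = ((1/50^n)^((n−1)/n) + (1−1/50^n)^((n−1)/n) − 1)⁻¹`. -/
theorem stmt_12 (n : ℕ) (hn : 2 ≤ n) (k : ℕ) (hk : 1 ≤ k)
    (Λ : Finset (List Bool)) (f : List Bool → ℝ)
    (hroot : [] ∈ Λ) (hf_root : f [] = 1)
    (hprefix : ∀ α ∈ Λ, ∀ β : List Bool, β <+: α → β ∈ Λ)
    (hsib : ∀ α : List Bool, α ++ [false] ∈ Λ ↔ α ++ [true] ∈ Λ)
    (hpos : ∀ α ∈ Λ, 0 < f α)
    (hsplit : ∀ α ∈ Λ, α ++ [false] ∈ Λ →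
      f α = f (α ++ [false]) + f (α ++ [true]) ∧
      f α / 25 ^ n ≤ f (α ++ [false]) ∧ f α / 25 ^ n ≤ f (α ++ [true]))
    (hleaf : ∀ α ∈ Λ, α ++ [false] ∉ Λ → f α < 50 ^ n / (k : ℝ))
    (hinternal : ∀ α ∈ Λ, α ++ [false] ∈ Λ → 50 ^ n / (k : ℝ) ≤ f α) :
    (∑ α ∈ Λ.filter (fun α => α ++ [false] ∈ Λ), f α ^ (((n : ℝ) - 1) / n)) + 1 ≤
      (1 + ((1 / 50 ^ n : ℝ) ^ (((n : ℝ) - 1) / n) +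
          (1 - (1 / 50 ^ n : ℝ)) ^ (((n : ℝ) - 1) / n) - 1)⁻¹) *
        (k : ℝ) ^ ((1 : ℝ) / n) := by
  classical
  have hn2 : (2:ℝ) ≤ (n:ℝ) := by exact_mod_cast hn
  have hk1 : (1:ℝ) ≤ (k:ℝ) := by exact_mod_cast hk
  have hk0 : (0:ℝ) < (k:ℝ) := by linarith
  set θ : ℝ := ((n : ℝ) - 1) / n with hθ
  have hθ0 : 0 < θ := by rw [hθ]; apply div_pos <;> linarith
  have hθ1 : θ < 1 := by rw [hθ, div_lt_one (by linarith)]; linarith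
  set lam : ℝ := (1 / 50 ^ n : ℝ) with hlam
  have h50 : (2:ℝ) < 50 ^ n := by
    calc (2:ℝ) < 50 ^ 2 := by norm_num
      _ ≤ 50 ^ n := pow_le_pow_right₀ (by norm_num) hn
  have hlam0 : 0 < lam := by rw [hlam]; positivity
  have hlam2 : lam < 1/2 := by
    rw [hlam, div_lt_div_iff₀ (by linarith) (by norm_num)]
    linarith
  set c : ℝ := lam ^ θ + (1 - lam) ^ θ - 1 with hc
  have hc0 : 0 < c := by
    have h1 : lam < lam ^ θ := by
      have := Real.rpow_lt_rpow_of_exponent_gt hlam0 (by linarith) hθ1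
      simpa using this
    have h2 : 1 - lam < (1 - lam) ^ θ := by
      have := Real.rpow_lt_rpow_of_exponent_gt (x := 1 - lam) (by linarith) (by linarith) hθ1
      simpa using this
    rw [hc]; linarith
  have h2550 : (25:ℝ) ^ n ≤ 50 ^ n := pow_le_pow_left₀ (by norm_num) (by norm_num) n
  have h25pos : (0:ℝ) < (25:ℝ) ^ n := by positivity
  -- key induction on the tree
  have key : ∀ m : ℕ, ∀ β, β ∈ Λ → (Λ.filter (fun α => β <+: α)).card ≤ m →
      (∑ α ∈ Λ.filter (fun α => β <+: α ∧ α ++ [false] ∉ Λ), f α) = f β ∧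
      f β ^ θ + c * ∑ α ∈ Λ.filter (fun α => β <+: α ∧ α ++ [false] ∈ Λ), f α ^ θ ≤
        ∑ α ∈ Λ.filter (fun α => β <+: α ∧ α ++ [false] ∉ Λ), f α ^ θ := by
    intro m
    induction m with
    | zero =>
      intro β hβ hcard
      exfalso
      have hmem : β ∈ Λ.filter (fun α => β <+: α) :=
        Finset.mem_filter.mpr ⟨hβ, List.prefix_refl β⟩
      have := Finset.card_pos.mpr ⟨β, hmem⟩
      omega
    | succ m ih =>
      intro β hβ hcard
      by_cases hint : β ++ [false] ∈ Λ
      · -- internal node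
        have hint1 : β ++ [true] ∈ Λ := (hsib β).mp hint
        obtain ⟨hsum, hge0, hge1⟩ := hsplit β hβ hint
        have hsub : ∀ b : Bool,
            Λ.filter (fun α => β ++ [b] <+: α) ⊆ (Λ.filter (fun α => β <+: α)).erase β := by
          intro b α hα
          simp only [Finset.mem_filter] at hα
          exact Finset.mem_erase.mpr
            ⟨pref_ne hα.2, Finset.mem_filter.mpr ⟨hα.1, pref_of_step hα.2⟩⟩
        have hcard' : ∀ b : Bool, (Λ.filter (fun α => β ++ [b] <+: α)).card ≤ m := by
          intro b
          have h1 := Finset.card_le_card (hsub b)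
          have hmem : β ∈ Λ.filter (fun α => β <+: α) :=
            Finset.mem_filter.mpr ⟨hβ, List.prefix_refl β⟩
          have h2 := Finset.card_erase_of_mem hmem
          have h3 := Finset.card_pos.mpr ⟨β, hmem⟩
          omega
        have IH0 := ih (β ++ [false]) hint (hcard' false)
        have IH1 := ih (β ++ [true]) hint1 (hcard' true)
        have hLeq : Λ.filter (fun α => β <+: α ∧ α ++ [false] ∉ Λ) =
            Λ.filter (fun α => β ++ [false] <+: α ∧ α ++ [false] ∉ Λ) ∪
            Λ.filter (fun α => β ++ [true] <+: α ∧ α ++ [false] ∉ Λ) := by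
          ext α
          simp only [Finset.mem_filter, Finset.mem_union]
          constructor
          · rintro ⟨hαΛ, hpre, hlf⟩
            have hne : α ≠ β := by rintro rfl; exact hlf hint
            rcases pref_step hpre hne with h | h
            · exact Or.inl ⟨hαΛ, h, hlf⟩
            · exact Or.inr ⟨hαΛ, h, hlf⟩
          · rintro (⟨hαΛ, h, hlf⟩ | ⟨hαΛ, h, hlf⟩) <;> exact ⟨hαΛ, pref_of_step h, hlf⟩
        have hLdisj : Disjoint
            (Λ.filter (fun α => β ++ [false] <+: α ∧ α ++ [false] ∉ Λ))
            (Λ.filter (fun α => β ++ [true] <+: α ∧ α ++ [false] ∉ Λ)) := by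
          rw [Finset.disjoint_left]
          intro α h0 h1
          simp only [Finset.mem_filter] at h0 h1
          exact pref_incomp h0.2.1 h1.2.1
        have hIeq : Λ.filter (fun α => β <+: α ∧ α ++ [false] ∈ Λ) =
            insert β (Λ.filter (fun α => β ++ [false] <+: α ∧ α ++ [false] ∈ Λ) ∪
              Λ.filter (fun α => β ++ [true] <+: α ∧ α ++ [false] ∈ Λ)) := by
          ext α
          simp only [Finset.mem_filter, Finset.mem_union, Finset.mem_insert]
          constructor
          · rintro ⟨hαΛ, hpre, hin⟩
            by_cases hne : α = β
            · exact Or.inl hne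
            · rcases pref_step hpre hne with h | h
              · exact Or.inr (Or.inl ⟨hαΛ, h, hin⟩)
              · exact Or.inr (Or.inr ⟨hαΛ, h, hin⟩)
          · rintro (rfl | ⟨hαΛ, h, hin⟩ | ⟨hαΛ, h, hin⟩)
            · exact ⟨hβ, List.prefix_refl _, hint⟩
            · exact ⟨hαΛ, pref_of_step h, hin⟩
            · exact ⟨hαΛ, pref_of_step h, hin⟩
        have hβnotin : β ∉
            (Λ.filter (fun α => β ++ [false] <+: α ∧ α ++ [false] ∈ Λ) ∪
              Λ.filter (fun α => β ++ [true] <+: α ∧ α ++ [false] ∈ Λ)) := by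
          intro hmem
          simp only [Finset.mem_filter, Finset.mem_union] at hmem
          rcases hmem with ⟨-, h, -⟩ | ⟨-, h, -⟩ <;> exact pref_ne h rfl
        have hIdisj : Disjoint
            (Λ.filter (fun α => β ++ [false] <+: α ∧ α ++ [false] ∈ Λ))
            (Λ.filter (fun α => β ++ [true] <+: α ∧ α ++ [false] ∈ Λ)) := by
          rw [Finset.disjoint_left]
          intro α h0 h1
          simp only [Finset.mem_filter] at h0 h1
          exact pref_incomp h0.2.1 h1.2.1
        constructor
        · rw [hLeq, Finset.sum_union hLdisj, IH0.1, IH1.1]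
          linarith
        · rw [hLeq, Finset.sum_union hLdisj, hIeq, Finset.sum_insert hβnotin,
            Finset.sum_union hIdisj]
          have hlamle0 : lam * f β ≤ f (β ++ [false]) := by
            have h1 : lam * f β ≤ f β / 25 ^ n := by
              have e : lam * f β = f β / 50 ^ n := by rw [hlam]; ring
              rw [e, div_le_div_iff₀ (by linarith) h25pos]
              nlinarith [(hpos β hβ).le, h2550]
            linarith
          have hlamle1 : lam * f β ≤ f (β ++ [true]) := by
            have h1 : lam * f β ≤ f β / 25 ^ n := by
              have e : lam * f β = f β / 50 ^ n := by rw [hlam]; ring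
              rw [e, div_le_div_iff₀ (by linarith) h25pos]
              nlinarith [(hpos β hβ).le, h2550]
            linarith
          have hsb := split_bound hθ0 hθ1 hlam0 hlam2 (hpos β hβ) hsum hlamle0 hlamle1
          have hone : lam ^ θ + (1 - lam) ^ θ = 1 + c := by rw [hc]; ring
          rw [hone] at hsb
          linarith [IH0.2, IH1.2]
      · -- leaf node
        have hLeq : Λ.filter (fun α => β <+: α ∧ α ++ [false] ∉ Λ) = {β} := by
          ext α
          simp only [Finset.mem_filter, Finset.mem_singleton]
          constructor
          · rintro ⟨hαΛ, hpre, hlf⟩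
            by_contra hne
            rcases pref_step hpre hne with h | h
            · exact hint (hprefix α hαΛ _ h)
            · exact hint ((hsib β).mpr (hprefix α hαΛ _ h))
          · rintro rfl
            exact ⟨hβ, List.prefix_refl _, hint⟩
        have hIeq : Λ.filter (fun α => β <+: α ∧ α ++ [false] ∈ Λ) = ∅ := by
          rw [Finset.eq_empty_iff_forall_notMem]
          intro α hα
          simp only [Finset.mem_filter] at hα
          obtain ⟨hαΛ, hpre, hin⟩ := hα
          by_cases hne : α = β
          · subst hne; exact hint hin
          · rcases pref_step hpre hne with h | h
            · exact hint (hprefix α hαΛ _ h)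
            · exact hint ((hsib β).mpr (hprefix α hαΛ _ h))
        rw [hLeq, hIeq]
        simp
  -- assemble
  by_cases hri : [false] ∈ Λ
  · -- root internal
    have K := key Λ.card [] hroot (Finset.card_filter_le Λ _)
    have hK1 : (∑ α ∈ Λ.filter (fun α => [] <+: α ∧ α ++ [false] ∉ Λ), f α) = 1 := by
      rw [K.1, hf_root]
    have hK2 : 1 + c * ∑ α ∈ Λ.filter (fun α => [] <+: α ∧ α ++ [false] ∈ Λ), f α ^ θ ≤
        ∑ α ∈ Λ.filter (fun α => [] <+: α ∧ α ++ [false] ∉ Λ), f α ^ θ := by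
      have := K.2
      rwa [hf_root, Real.one_rpow] at this
    have hLb : ∀ α ∈ Λ.filter (fun α => [] <+: α ∧ α ++ [false] ∉ Λ),
        f α ^ θ ≤ f α * (k:ℝ) ^ ((1:ℝ)/n) := by
      intro α hα
      simp only [Finset.mem_filter] at hα
      obtain ⟨hαΛ, -, hlf⟩ := hα
      have hαne : α ≠ [] := by rintro rfl; exact hlf hri
      rcases List.eq_nil_or_concat' α with rfl | ⟨γ, b, rfl⟩
      · exact absurd rfl hαne
      · have hγ : γ ∈ Λ := hprefix _ hαΛ γ (List.prefix_append γ [b])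
        have hγ0 : γ ++ [false] ∈ Λ := by
          cases b
          · exact hαΛ
          · exact (hsib γ).mpr hαΛ
        obtain ⟨hs, h0, h1⟩ := hsplit γ hγ hγ0
        have hγbig := hinternal γ hγ hγ0
        have hchild : f γ / 25 ^ n ≤ f (γ ++ [b]) := by cases b; exacts [h0, h1]
        have hfα : 1 / (k:ℝ) ≤ f (γ ++ [b]) := by
          have hmid : (50:ℝ) ^ n / k / 25 ^ n ≤ f γ / 25 ^ n := by gcongr
          have hlow : 1 / (k:ℝ) ≤ (50:ℝ) ^ n / k / 25 ^ n := by
            rw [div_div, div_le_div_iff₀ hk0 (by positivity)]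
            linarith [mul_le_mul_of_nonneg_left h2550 hk0.le]
          linarith
        have hfpos := hpos _ hαΛ
        have h1k : (1:ℝ) ≤ f (γ ++ [b]) * k := by
          rw [div_le_iff₀ hk0] at hfα
          linarith
        have h2 : (1:ℝ) ≤ (f (γ ++ [b]) * k) ^ ((1:ℝ)/n) :=
          Real.one_le_rpow h1k (by positivity)
        rw [Real.mul_rpow hfpos.le hk0.le] at h2
        have hexp : θ + 1/(n:ℝ) = 1 := by rw [hθ]; field_simp; ring
        calc f (γ ++ [b]) ^ θ = f (γ ++ [b]) ^ θ * 1 := by ring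
          _ ≤ f (γ ++ [b]) ^ θ * (f (γ ++ [b]) ^ ((1:ℝ)/n) * (k:ℝ) ^ ((1:ℝ)/n)) :=
              mul_le_mul_of_nonneg_left h2 (by positivity)
          _ = (f (γ ++ [b]) ^ θ * f (γ ++ [b]) ^ ((1:ℝ)/n)) * (k:ℝ) ^ ((1:ℝ)/n) := by ring
          _ = f (γ ++ [b]) * (k:ℝ) ^ ((1:ℝ)/n) := by
              rw [← Real.rpow_add hfpos, hexp, Real.rpow_one]
    have hsumL : ∑ α ∈ Λ.filter (fun α => [] <+: α ∧ α ++ [false] ∉ Λ), f α ^ θ ≤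
        (k:ℝ) ^ ((1:ℝ)/n) := by
      calc ∑ α ∈ Λ.filter (fun α => [] <+: α ∧ α ++ [false] ∉ Λ), f α ^ θ
          ≤ ∑ α ∈ Λ.filter (fun α => [] <+: α ∧ α ++ [false] ∉ Λ),
              f α * (k:ℝ) ^ ((1:ℝ)/n) := Finset.sum_le_sum hLb
        _ = (∑ α ∈ Λ.filter (fun α => [] <+: α ∧ α ++ [false] ∉ Λ), f α) *
              (k:ℝ) ^ ((1:ℝ)/n) := by rw [← Finset.sum_mul]
        _ = (k:ℝ) ^ ((1:ℝ)/n) := by rw [hK1, one_mul]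
    have hfilter : Λ.filter (fun α => α ++ [false] ∈ Λ) =
        Λ.filter (fun α => [] <+: α ∧ α ++ [false] ∈ Λ) := by
      ext α
      simp [Finset.mem_filter, List.nil_prefix]
    rw [hfilter]
    set B := ∑ α ∈ Λ.filter (fun α => [] <+: α ∧ α ++ [false] ∈ Λ), f α ^ θ with hB
    have hkp : (1:ℝ) ≤ (k:ℝ) ^ ((1:ℝ)/n) := Real.one_le_rpow hk1 (by positivity)
    have hcB : c * B ≤ (k:ℝ) ^ ((1:ℝ)/n) - 1 := by
      have h := hK2.trans hsumL
      linarith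
    have hB2 : B ≤ c⁻¹ * ((k:ℝ) ^ ((1:ℝ)/n) - 1) := by
      rw [inv_mul_eq_div, le_div_iff₀ hc0]
      linarith
    have hci : 0 < c⁻¹ := inv_pos.mpr hc0
    nlinarith [hB2, hkp, hci]
  · -- root is a leaf: Λ = {[]}
    have hΛ : Λ.filter (fun α => α ++ [false] ∈ Λ) = ∅ := by
      rw [Finset.eq_empty_iff_forall_notMem]
      intro α hα
      simp only [Finset.mem_filter] at hα
      obtain ⟨hαΛ, hin⟩ := hα
      by_cases hα0 : α = []
      · subst hα0; exact hri hin
      · rcases pref_step List.nil_prefix hα0 with h | h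
        · exact hri (hprefix α hαΛ _ h)
        · exact hri ((hsib []).mpr (hprefix α hαΛ _ h))
    rw [hΛ]
    simp only [Finset.sum_empty, zero_add]
    have hkp : (1:ℝ) ≤ (k:ℝ) ^ ((1:ℝ)/n) := Real.one_le_rpow hk1 (by positivity)
    have hci : 0 < c⁻¹ := inv_pos.mpr hc0
    nlinarith
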